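/- Let a multiset $S$ of $n$ items with frequencies $(f_x)$ be arranged in uniformly random order, and let $Y_x^{(t)}$ be the squared number of occurrences of $x$ among the first $t$ positions. Then $\mathrm{var}(Y_x^{(t)}) \le 3 f_x^3$ for every $x$ and every $t \le n$. -/

import Mathlib

open Finset

section aux

private lemma fiber1' {n : ℕ} (i k : Fin n) :
    (univ.filter fun π : Equiv.Perm (Fin n) => π i = k).card = (n-1).factorial := by
  have hconst : ∀ k1 k2 : Fin n,
      (univ.filter fun π : Equiv.Perm (Fin n) => π i = k1).card
        = (univ.filter fun π : Equiv.Perm (Fin n) => π i = k2).card := by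
    intro k1 k2
    apply Finset.card_nbij' (fun π => Equiv.swap k1 k2 * π) (fun π => Equiv.swap k1 k2 * π)
    · intro π hπ
      simp only [mem_coe, mem_filter, mem_univ, true_and] at hπ ⊢
      rw [Equiv.Perm.mul_apply, hπ, Equiv.swap_apply_left]
    · intro π hπ
      simp only [mem_coe, mem_filter, mem_univ, true_and] at hπ ⊢
      rw [Equiv.Perm.mul_apply, hπ, Equiv.swap_apply_right]
    · intro π _; dsimp only; rw [← mul_assoc, Equiv.swap_mul_self, one_mul]
    · intro π _; dsimp only; rw [← mul_assoc, Equiv.swap_mul_self, one_mul]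
  have hn : 0 < n := k.pos
  have hsum : (univ : Finset (Equiv.Perm (Fin n))).card
      = ∑ k' : Fin n, (univ.filter fun π : Equiv.Perm (Fin n) => π i = k').card :=
    Finset.card_eq_sum_card_fiberwise (fun π _ => mem_univ (π i))
  rw [Finset.sum_congr rfl (fun k' _ => hconst k' k), Finset.sum_const] at hsum
  simp only [card_univ, Fintype.card_perm, Fintype.card_fin, smul_eq_mul] at hsum
  exact (Nat.eq_of_mul_eq_mul_left hn ((Nat.mul_factorial_pred hn.ne').trans hsum)).symm

private lemma exists_perm_two' {β : Type*} [DecidableEq β] {k l k' l' : β}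
    (hkl : k ≠ l) (hkl' : k' ≠ l') :
    ∃ σ : Equiv.Perm β, σ k = k' ∧ σ l = l' := by
  refine ⟨(Equiv.swap (Equiv.swap k k' l) l') * (Equiv.swap k k'), ?_, ?_⟩
  · rw [Equiv.Perm.mul_apply, Equiv.swap_apply_left]
    refine Equiv.swap_apply_of_ne_of_ne ?_ hkl'
    intro h
    have h2 := congrArg (Equiv.swap k k') h
    rw [Equiv.swap_apply_self, Equiv.swap_apply_right] at h2
    exact hkl h2
  · rw [Equiv.Perm.mul_apply, Equiv.swap_apply_left]

private lemma fiber2' {n : ℕ} {i j : Fin n} (hij : i ≠ j) {k l : Fin n} (hkl : k ≠ l) :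
    (univ.filter fun π : Equiv.Perm (Fin n) => π i = k ∧ π j = l).card = (n-2).factorial := by
  have hn : 2 ≤ n := by
    by_contra h
    push_neg at h
    interval_cases n
    · exact i.elim0
    · exact hij (Subsingleton.elim i j)
  have hconst : ∀ (k1 l1 k2 l2 : Fin n), k1 ≠ l1 → k2 ≠ l2 →
      (univ.filter fun π : Equiv.Perm (Fin n) => π i = k1 ∧ π j = l1).card
        = (univ.filter fun π : Equiv.Perm (Fin n) => π i = k2 ∧ π j = l2).card := by
    intro k1 l1 k2 l2 h1 h2
    obtain ⟨σ, hσk, hσl⟩ := exists_perm_two' h1 h2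
    apply Finset.card_nbij' (fun π => σ * π) (fun π => σ⁻¹ * π)
    · intro π hπ
      simp only [mem_coe, mem_filter, mem_univ, true_and] at hπ ⊢
      rw [Equiv.Perm.mul_apply, Equiv.Perm.mul_apply, hπ.1, hπ.2, hσk, hσl]
      exact ⟨rfl, rfl⟩
    · intro π hπ
      simp only [mem_coe, mem_filter, mem_univ, true_and] at hπ ⊢
      rw [Equiv.Perm.mul_apply, Equiv.Perm.mul_apply, hπ.1, hπ.2, ← hσk, ← hσl,
        Equiv.Perm.inv_def, Equiv.symm_apply_apply, Equiv.symm_apply_apply]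
      exact ⟨rfl, rfl⟩
    · intro π _; dsimp only; rw [← mul_assoc, inv_mul_cancel, one_mul]
    · intro π _; dsimp only; rw [← mul_assoc, mul_inv_cancel, one_mul]
  have hmap : ∀ π : Equiv.Perm (Fin n), π ∈ (univ : Finset (Equiv.Perm (Fin n))) →
      (π i, π j) ∈ (univ : Finset (Fin n)).offDiag := by
    intro π _
    exact Finset.mem_offDiag.2 ⟨mem_univ _, mem_univ _, π.injective.ne hij⟩
  have hsum := Finset.card_eq_sum_card_fiberwise hmap
  have hre : ∀ p ∈ (univ : Finset (Fin n)).offDiag,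
      (univ.filter fun π : Equiv.Perm (Fin n) => (π i, π j) = p).card
        = (univ.filter fun π : Equiv.Perm (Fin n) => π i = k ∧ π j = l).card := by
    intro p hp
    obtain ⟨-, -, hne⟩ := Finset.mem_offDiag.1 hp
    rw [show (univ.filter fun π : Equiv.Perm (Fin n) => (π i, π j) = p)
        = (univ.filter fun π : Equiv.Perm (Fin n) => π i = p.1 ∧ π j = p.2) by
      apply Finset.filter_congr; intro π _; rw [Prod.ext_iff]]
    exact hconst p.1 p.2 k l hne hkl
  rw [Finset.sum_congr rfl hre, Finset.sum_const, Finset.offDiag_card] at hsum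
  simp only [card_univ, Fintype.card_perm, Fintype.card_fin, smul_eq_mul] at hsum
  obtain ⟨m, rfl⟩ : ∃ m, n = m + 2 := ⟨n - 2, by omega⟩
  have hfac : (m+2).factorial = ((m+2)*(m+2) - (m+2)) * m.factorial := by
    rw [show (m+2)*(m+2) - (m+2) = (m+2)*(m+1) by
      rw [show (m+2)*(m+2) = (m+2)*(m+1) + (m+2) by ring]; omega]
    rw [Nat.factorial_succ, Nat.factorial_succ]; ring
  rw [hfac] at hsum
  have hpos : 0 < (m+2)*(m+2) - (m+2) := by
    have h1 : (m+2)*(m+2) = (m+2)*(m+1) + (m+2) := by ring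
    have h2 : 0 < (m+2)*(m+1) := by positivity
    omega
  simpa using (Nat.eq_of_mul_eq_mul_left hpos hsum).symm

private lemma card_lt' {n t : ℕ} (ht : t ≤ n) :
    (univ.filter fun k : Fin n => (k:ℕ) < t).card = t := by
  rcases eq_or_lt_of_le ht with rfl | h
  · rw [Finset.filter_true_of_mem (fun k _ => k.isLt)]
    simp
  · have heq : (univ.filter fun k : Fin n => (k:ℕ) < t) = Finset.Iio ⟨t, h⟩ := by
      ext k; simp [Fin.lt_def]
    rw [heq, Fin.card_Iio]

private lemma count1' {n t : ℕ} (ht : t ≤ n) (i : Fin n) :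
    (univ.filter fun π : Equiv.Perm (Fin n) => (π i : ℕ) < t).card
      = t * (n-1).factorial := by
  have hmap : ∀ π ∈ (univ.filter fun π : Equiv.Perm (Fin n) => (π i:ℕ) < t),
      π i ∈ (univ.filter fun k : Fin n => (k:ℕ) < t) := by
    intro π hπ; simp only [mem_filter, mem_univ, true_and] at hπ ⊢; exact hπ
  have hsum := Finset.card_eq_sum_card_fiberwise hmap
  have hfib : ∀ k ∈ (univ.filter fun k : Fin n => (k:ℕ) < t),
      ((univ.filter fun π : Equiv.Perm (Fin n) => (π i:ℕ) < t).filter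
        fun π => π i = k).card = (n-1).factorial := by
    intro k hk
    rw [Finset.filter_filter]
    have heq : (univ.filter fun π : Equiv.Perm (Fin n) => ((π i:ℕ) < t ∧ π i = k))
        = univ.filter fun π : Equiv.Perm (Fin n) => π i = k := by
      ext π
      simp only [mem_filter, mem_univ, true_and]
      exact ⟨And.right, fun h => ⟨h ▸ (mem_filter.1 hk).2, h⟩⟩
    rw [heq, fiber1']
  rw [Finset.sum_congr rfl hfib, Finset.sum_const, card_lt' ht, smul_eq_mul] at hsum
  exact hsum

private lemma count2' {n t : ℕ} (ht : t ≤ n) {i j : Fin n} (hij : i ≠ j) :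
    (univ.filter fun π : Equiv.Perm (Fin n) => (π i : ℕ) < t ∧ (π j : ℕ) < t).card
      = (t*t - t) * (n-2).factorial := by
  have hmap : ∀ π ∈ (univ.filter fun π : Equiv.Perm (Fin n) =>
        (π i:ℕ) < t ∧ (π j:ℕ) < t),
      (π i, π j) ∈ (univ.filter fun k : Fin n => (k:ℕ) < t).offDiag := by
    intro π hπ
    simp only [mem_filter, mem_univ, true_and] at hπ
    exact Finset.mem_offDiag.2 ⟨by simp [hπ.1], by simp [hπ.2], π.injective.ne hij⟩
  have hsum := Finset.card_eq_sum_card_fiberwise hmap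
  have hfib : ∀ p ∈ (univ.filter fun k : Fin n => (k:ℕ) < t).offDiag,
      ((univ.filter fun π : Equiv.Perm (Fin n) => (π i:ℕ) < t ∧ (π j:ℕ) < t).filter
        fun π => (π i, π j) = p).card = (n-2).factorial := by
    intro p hp
    obtain ⟨hp1, hp2, hpne⟩ := Finset.mem_offDiag.1 hp
    simp only [mem_filter, mem_univ, true_and] at hp1 hp2
    rw [Finset.filter_filter]
    have heq : (univ.filter fun π : Equiv.Perm (Fin n) =>
          (((π i:ℕ) < t ∧ (π j:ℕ) < t) ∧ (π i, π j) = p))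
        = univ.filter fun π : Equiv.Perm (Fin n) => π i = p.1 ∧ π j = p.2 := by
      ext π
      simp only [mem_filter, mem_univ, true_and, Prod.ext_iff]
      constructor
      · exact And.right
      · rintro ⟨h1, h2⟩; exact ⟨⟨h1 ▸ hp1, h2 ▸ hp2⟩, h1, h2⟩
    rw [heq, fiber2' hij hpne]
  rw [Finset.sum_congr rfl hfib, Finset.sum_const, Finset.offDiag_card, card_lt' ht,
    smul_eq_mul] at hsum
  exact hsum

private lemma sumA' {α : Type*} [DecidableEq α] {n t : ℕ} (c : Fin n → α) (x : α)
    (ht : t ≤ n) :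
    ∑ π : Equiv.Perm (Fin n), (univ.filter fun i => c i = x ∧ (π i : ℕ) < t).card
      = (univ.filter fun i => c i = x).card * (t * (n-1).factorial) := by
  set S := univ.filter fun i => c i = x with hS
  have h1 : ∀ π : Equiv.Perm (Fin n),
      (univ.filter fun i => c i = x ∧ (π i : ℕ) < t).card
        = ∑ i ∈ S, if (π i : ℕ) < t then 1 else 0 := by
    intro π
    rw [← Finset.filter_filter, Finset.card_filter]
  rw [Finset.sum_congr rfl (fun π _ => h1 π), Finset.sum_comm]
  have h2 : ∀ i ∈ S, (∑ π : Equiv.Perm (Fin n), if (π i : ℕ) < t then 1 else 0)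
      = t * (n-1).factorial := by
    intro i _
    rw [← Finset.card_filter, count1' ht i]
  rw [Finset.sum_congr rfl h2, Finset.sum_const, smul_eq_mul]

private lemma sumB' {α : Type*} [DecidableEq α] {n t : ℕ} (c : Fin n → α) (x : α)
    (ht : t ≤ n) :
    ∑ π : Equiv.Perm (Fin n), ((univ.filter fun i => c i = x ∧ (π i : ℕ) < t).card)^2
      = (univ.filter fun i => c i = x).card * (t * (n-1).factorial)
        + (univ.filter fun i => c i = x).card * ((univ.filter fun i => c i = x).card - 1)
          * ((t*t - t) * (n-2).factorial) := by
  set S := univ.filter fun i => c i = x with hS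
  have h1 : ∀ π : Equiv.Perm (Fin n),
      ((univ.filter fun i => c i = x ∧ (π i : ℕ) < t).card)^2
        = ∑ i ∈ S, ∑ j ∈ S, if (π i : ℕ) < t ∧ (π j : ℕ) < t then 1 else 0 := by
    intro π
    rw [← Finset.filter_filter, Finset.card_filter, sq, Finset.sum_mul_sum]
    refine Finset.sum_congr rfl fun i _ => Finset.sum_congr rfl fun j _ => ?_
    by_cases hi : (π i : ℕ) < t <;> by_cases hj : (π j : ℕ) < t <;> simp [hi, hj]
  rw [Finset.sum_congr rfl (fun π _ => h1 π), Finset.sum_comm]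
  have h2 : ∀ i ∈ S, (∑ π : Equiv.Perm (Fin n), ∑ j ∈ S,
        if (π i : ℕ) < t ∧ (π j : ℕ) < t then 1 else 0)
      = t * (n-1).factorial + (S.card - 1) * ((t*t - t) * (n-2).factorial) := by
    intro i hi
    rw [Finset.sum_comm]
    have h3 : ∀ j ∈ S, (∑ π : Equiv.Perm (Fin n),
          if (π i : ℕ) < t ∧ (π j : ℕ) < t then 1 else 0)
        = if j = i then t * (n-1).factorial else (t*t - t) * (n-2).factorial := by
      intro j _
      rw [← Finset.card_filter]
      by_cases hji : j = i
      · subst hji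
        rw [if_pos rfl, show (univ.filter fun π : Equiv.Perm (Fin n) =>
            (π j : ℕ) < t ∧ (π j : ℕ) < t) = univ.filter fun π : Equiv.Perm (Fin n) =>
            (π j : ℕ) < t by ext π; simp, count1' ht j]
      · rw [if_neg hji, count2' ht (fun h => hji h.symm)]
    rw [Finset.sum_congr rfl h3, ← Finset.add_sum_erase S _ hi, if_pos rfl,
      Finset.sum_congr rfl (fun j hj => if_neg (Finset.mem_erase.1 hj).1),
      Finset.sum_const, Finset.card_erase_of_mem hi, smul_eq_mul]
  rw [Finset.sum_congr rfl h2, Finset.sum_const, smul_eq_mul]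
  simp [mul_add, mul_assoc]

private lemma var_bound' {ι : Type*} [Fintype ι] (g : ι → ℝ) (F fq : ℝ) (hF : 0 < F)
    (hcard : ((Fintype.card ι : ℕ) : ℝ) = F) (h0 : ∀ π, 0 ≤ g π) (hub : ∀ π, g π ≤ fq)
    (hfq : 0 ≤ fq)
    (hvar : (∑ π, (g π)^2)/F - ((∑ π, g π)/F)^2 ≤ fq/4) :
    (∑ π, ((g π)^2)^2)/F - ((∑ π, (g π)^2)/F)^2 ≤ 3*fq^3 := by
  set μ := (∑ π, g π)/F with hμdef
  set B := ∑ π, (g π)^2 with hBdef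
  set D := ∑ π, ((g π)^2)^2 with hDdef
  have hFne : F ≠ 0 := ne_of_gt hF
  have hsumconst : ∀ a : ℝ, ∑ _π : ι, a = F * a := by
    intro a
    rw [Finset.sum_const, Finset.card_univ, nsmul_eq_mul, hcard]
  have hexp : ∑ π, ((g π)^2 - μ^2)^2 = D - 2*μ^2*B + F*(μ^2)^2 := by
    have h1 : ∀ π : ι, ((g π)^2 - μ^2)^2
        = ((g π)^2)^2 - 2*μ^2*(g π)^2 + (μ^2)^2 := fun π => by ring
    rw [Finset.sum_congr rfl (fun π _ => h1 π), Finset.sum_add_distrib,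
      Finset.sum_sub_distrib, ← Finset.mul_sum, hsumconst, ← hBdef, ← hDdef]
  have step1 : D/F - (B/F)^2 ≤ (∑ π, ((g π)^2 - μ^2)^2)/F := by
    have h2 : (D - 2*μ^2*B + F*(μ^2)^2)/F = D/F - 2*μ^2*(B/F) + (μ^2)^2 := by
      field_simp
    rw [hexp, h2]
    nlinarith [sq_nonneg (B/F - μ^2)]
  have hμ0 : 0 ≤ μ := div_nonneg (Finset.sum_nonneg fun π _ => h0 π) hF.le
  have hμf : μ ≤ fq := by
    rw [hμdef, div_le_iff₀ hF]
    calc ∑ π, g π ≤ ∑ _π : ι, fq := Finset.sum_le_sum fun π _ => hub π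
    _ = F * fq := hsumconst fq
    _ = fq * F := mul_comm _ _
  have step2 : ∑ π, ((g π)^2 - μ^2)^2 ≤ ∑ π, 4*fq^2*(g π - μ)^2 := by
    apply Finset.sum_le_sum
    intro π _
    have h4 : (g π + μ)^2 ≤ 4*fq^2 := by nlinarith [h0 π, hub π]
    calc ((g π)^2 - μ^2)^2 = (g π - μ)^2 * (g π + μ)^2 := by ring
      _ ≤ (g π - μ)^2 * (4*fq^2) := mul_le_mul_of_nonneg_left h4 (sq_nonneg _)
      _ = 4*fq^2*(g π - μ)^2 := by ring
  have hexp2 : ∑ π, (g π - μ)^2 = B - 2*μ*(∑ π, g π) + F*μ^2 := by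
    have h1 : ∀ π : ι, (g π - μ)^2 = (g π)^2 - 2*μ*(g π) + μ^2 := fun π => by ring
    rw [Finset.sum_congr rfl (fun π _ => h1 π), Finset.sum_add_distrib,
      Finset.sum_sub_distrib, ← Finset.mul_sum, hsumconst, ← hBdef]
  have hsg : ∑ π, g π = μ * F := by rw [hμdef]; field_simp
  have step3 : (∑ π, (g π - μ)^2)/F = B/F - μ^2 := by
    rw [hexp2, hsg]; field_simp; ring
  calc D/F - (B/F)^2 ≤ (∑ π, ((g π)^2 - μ^2)^2)/F := step1
    _ ≤ (∑ π, 4*fq^2*(g π - μ)^2)/F := by gcongr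
    _ = 4*fq^2*((∑ π, (g π - μ)^2)/F) := by rw [← Finset.mul_sum]; ring
    _ = 4*fq^2*(B/F - μ^2) := by rw [step3]
    _ ≤ 4*fq^2*(fq/4) := mul_le_mul_of_nonneg_left hvar (by positivity)
    _ ≤ 3*fq^3 := by nlinarith [pow_nonneg hfq 3]

private lemma core_final' (em et ec q : ℝ) (hq : 0 < q) (hem : 0 ≤ em) (het : 0 ≤ et)
    (hten : et ≤ em + 2) (hef : 0 ≤ ec) (heff : ec ≤ ec^2) :
    (ec*(et*((em+1)*q)) + (ec^2-ec)*((et^2-et)*q)) * ((em+2)*((em+1)*q))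
      - (ec*(et*((em+1)*q)))^2 ≤ ec/4 * ((em+2)*((em+1)*q))^2 := by
  have key1 : 0 ≤ (ec^2 - ec) * (et*((em+2) - et)) :=
    mul_nonneg (by linarith) (mul_nonneg het (by linarith))
  have key2 : 0 ≤ (ec*(em+1))*((em+2)-2*et)^2 :=
    mul_nonneg (mul_nonneg hef (by linarith)) (sq_nonneg _)
  have core : ec*et*(em+2)*(em+1) + (ec^2-ec)*(et^2-et)*(em+2) - ec^2*et^2*(em+1)
      ≤ ec/4*(em+2)^2*(em+1) := by linarith [key1, key2]
  have hmul := mul_le_mul_of_nonneg_right core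
    (show (0:ℝ) ≤ (em+1)*q^2 by positivity)
  nlinarith [hmul]

end aux

set_option maxHeartbeats 1000000 in
/-- Variance bound for the squared prefix-count of a single element in a uniformly
random order stream: `var(Y_x^{(t)}) ≤ 3 f_x³`. The `n` occurrences are indexed by
`Fin n`, `c i` is the element of occurrence `i`, `f x` its frequency, and a uniformly
random permutation assigns positions; `Y_x^{(t)}(π)` is the squared number of
occurrences of `x` among the first `t` positions. -/
theorem variance_prefix_count_sq {α : Type*} [Fintype α] [DecidableEq α]
    (n t : ℕ) (ht : t ≤ n) (c : Fin n → α) (f : α → ℕ)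
    (hf : ∀ x, f x = (Finset.univ.filter (fun i => c i = x)).card) (x : α) :
    (∑ π : Equiv.Perm (Fin n),
        (((Finset.univ.filter (fun i => c i = x ∧ (π i : ℕ) < t)).card : ℝ) ^ 2) ^ 2)
        / (Nat.factorial n : ℝ)
      - ((∑ π : Equiv.Perm (Fin n),
            ((Finset.univ.filter (fun i => c i = x ∧ (π i : ℕ) < t)).card : ℝ) ^ 2)
          / (Nat.factorial n : ℝ)) ^ 2
      ≤ 3 * (f x : ℝ) ^ 3 := by
  classical
  have hF : (0:ℝ) < (n.factorial : ℝ) := by exact_mod_cast n.factorial_pos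
  have hcard : ((Fintype.card (Equiv.Perm (Fin n)) : ℕ) : ℝ) = (n.factorial : ℝ) := by
    rw [Fintype.card_perm, Fintype.card_fin]
  set cS := (Finset.univ.filter fun i => c i = x).card with hcS
  have hfx : (f x : ℝ) = (cS : ℝ) := by exact_mod_cast congrArg (Nat.cast (R := ℝ)) (hf x)
  have h0 : ∀ π : Equiv.Perm (Fin n),
      (0:ℝ) ≤ ((Finset.univ.filter fun i => c i = x ∧ (π i : ℕ) < t).card : ℝ) :=
    fun π => Nat.cast_nonneg _
  have hub : ∀ π : Equiv.Perm (Fin n),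
      ((Finset.univ.filter fun i => c i = x ∧ (π i : ℕ) < t).card : ℝ) ≤ (f x : ℝ) := by
    intro π
    rw [hfx]
    have hsub : (Finset.univ.filter fun i => c i = x ∧ (π i : ℕ) < t)
        ⊆ (Finset.univ.filter fun i => c i = x) := by
      intro i hi
      simp only [mem_filter] at hi ⊢
      exact ⟨hi.1, hi.2.1⟩
    exact_mod_cast Finset.card_le_card hsub
  have hfq : (0:ℝ) ≤ (f x : ℝ) := Nat.cast_nonneg _
  have hvar : (∑ π : Equiv.Perm (Fin n),
        ((Finset.univ.filter fun i => c i = x ∧ (π i : ℕ) < t).card : ℝ)^2)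
          / (n.factorial : ℝ)
      - ((∑ π : Equiv.Perm (Fin n),
            ((Finset.univ.filter fun i => c i = x ∧ (π i : ℕ) < t).card : ℝ))
          / (n.factorial : ℝ))^2 ≤ (f x : ℝ)/4 := by
    rw [hfx]
    rcases Nat.lt_or_ge n 2 with hn2 | hn2
    · have hone : ∀ π : Equiv.Perm (Fin n), π = 1 := by
        intro π
        apply Equiv.ext
        intro k
        apply Fin.ext
        have h1 := (π k).isLt
        have h2 := k.isLt
        simp only [Equiv.Perm.one_apply]
        omega
      have huniv : (univ : Finset (Equiv.Perm (Fin n))) = {1} :=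
        Finset.eq_singleton_iff_unique_mem.2 ⟨mem_univ 1, fun π _ => hone π⟩
      have hfac : n.factorial = 1 := by
        rcases (show n = 0 ∨ n = 1 by omega) with h | h <;> rw [h] <;> rfl
      rw [huniv, Finset.sum_singleton, Finset.sum_singleton, hfac, Nat.cast_one, div_one,
        div_one, sub_self]
      positivity
    · have hAr : (∑ π : Equiv.Perm (Fin n),
          ((Finset.univ.filter fun i => c i = x ∧ (π i : ℕ) < t).card : ℝ))
          = ((cS * (t * (n-1).factorial) : ℕ) : ℝ) := by
        rw [← Nat.cast_sum]
        exact_mod_cast congrArg (Nat.cast (R := ℝ)) (sumA' c x ht)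
      have hBr : (∑ π : Equiv.Perm (Fin n),
          ((Finset.univ.filter fun i => c i = x ∧ (π i : ℕ) < t).card : ℝ)^2)
          = ((cS * (t * (n-1).factorial)
              + cS * (cS - 1) * ((t*t - t) * (n-2).factorial) : ℕ) : ℝ) := by
        rw [Finset.sum_congr rfl (fun π _ =>
          (Nat.cast_pow ((Finset.univ.filter fun i => c i = x ∧ (π i : ℕ) < t).card) 2).symm),
          ← Nat.cast_sum]
        exact_mod_cast congrArg (Nat.cast (R := ℝ)) (sumB' c x ht)
      have hn0 : 0 < n := by omega
      have hn1 : 1 ≤ n - 1 := by omega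
      have hcast1 : ((n-1 : ℕ) : ℝ) = (n:ℝ) - 1 := by
        rw [Nat.cast_sub (by omega : 1 ≤ n)]; norm_num
      have hcast2 : ((n-2 : ℕ) : ℝ) = (n:ℝ) - 2 := by
        rw [Nat.cast_sub hn2]; norm_num
      have hq : (0:ℝ) < ((n-2).factorial : ℝ) := by exact_mod_cast (n-2).factorial_pos
      have hfac1 : (((n-1)).factorial : ℝ) = ((n:ℝ)-1) * ((n-2).factorial : ℝ) := by
        rw [show n-1 = (n-2)+1 by omega, Nat.factorial_succ, Nat.cast_mul,
          Nat.cast_add, hcast2, Nat.cast_one]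
        ring_nf
      have hfacF : ((n.factorial : ℕ) : ℝ) = (n:ℝ) * (((n:ℝ)-1) * ((n-2).factorial : ℝ)) := by
        have a1 := Nat.mul_factorial_pred (show n ≠ 0 by omega)
        have a2 := Nat.mul_factorial_pred (show n - 1 ≠ 0 by omega)
        rw [show n - 1 - 1 = n - 2 by omega] at a2
        rw [← a1, ← a2, Nat.cast_mul, Nat.cast_mul, hcast1]
      have hccast : ((cS * (cS - 1) : ℕ) : ℝ) = (cS:ℝ)^2 - (cS:ℝ) := by
        rcases Nat.eq_zero_or_pos cS with h | h
        · simp [h]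
        · rw [Nat.cast_mul, Nat.cast_sub h]
          push_cast
          ring
      have htle : t ≤ t * t := by
        rcases Nat.eq_zero_or_pos t with h | h
        · simp [h]
        · exact Nat.le_mul_of_pos_left _ h
      have htcast : ((t*t - t : ℕ) : ℝ) = (t:ℝ)^2 - (t:ℝ) := by
        rw [Nat.cast_sub htle]
        push_cast
        ring
      have e1 : ((cS * (t * (n-1).factorial) : ℕ) : ℝ)
          = (cS:ℝ)*((t:ℝ)*(((n:ℝ)-1) * ((n-2).factorial : ℝ))) := by
        rw [Nat.cast_mul, Nat.cast_mul, hfac1]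
      have e2 : ((cS * (t * (n-1).factorial)
              + cS * (cS - 1) * ((t*t - t) * (n-2).factorial) : ℕ) : ℝ)
          = (cS:ℝ)*((t:ℝ)*(((n:ℝ)-1) * ((n-2).factorial : ℝ)))
            + ((cS:ℝ)^2-(cS:ℝ))*(((t:ℝ)^2-(t:ℝ)) * ((n-2).factorial : ℝ)) := by
        rw [Nat.cast_add, e1, Nat.cast_mul (cS * (cS-1)), Nat.cast_mul (t*t - t),
          hccast, htcast]
      rw [hAr, hBr, e1, e2, hfacF]
      have hnr : (2:ℝ) ≤ (n:ℝ) := by exact_mod_cast hn2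
      have hFpos : (0:ℝ) < (n:ℝ) * (((n:ℝ)-1) * ((n-2).factorial : ℝ)) :=
        mul_pos (by linarith) (mul_pos (by linarith) hq)
      have hiden : ∀ X A F : ℝ, F ≠ 0 → X/F - (A/F)^2 = (X*F - A^2)/F^2 := by
        intro X A F hFne
        field_simp
      rw [hiden _ _ _ (ne_of_gt hFpos), div_le_iff₀ (by positivity)]
      have heff : (cS:ℝ) ≤ (cS:ℝ)^2 := by
        rcases Nat.eq_zero_or_pos cS with h | h
        · simp [h]
        · have h1 : (1:ℝ) ≤ (cS:ℝ) := by exact_mod_cast h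
          nlinarith
      have htenr : (t:ℝ) ≤ (n:ℝ) := by exact_mod_cast ht
      have hcore := core_final' ((n:ℝ)-2) (t:ℝ) (cS:ℝ) ((n-2).factorial : ℝ) hq
        (by linarith) (Nat.cast_nonneg t) (by linarith) (Nat.cast_nonneg cS) heff
      linarith [hcore]
  exact var_bound'
    (fun π : Equiv.Perm (Fin n) =>
      ((Finset.univ.filter fun i => c i = x ∧ (π i : ℕ) < t).card : ℝ))
    (n.factorial : ℝ) (f x : ℝ) hF hcard h0 hub hfq hvar
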